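/- Regret lower bound for full-information stochastic bandits: there exist absolute constants c > 0, d > 0, a > 0 and K₀ ∈ ℕ such that for every integer K ≥ K₀ and every integer T ≥ 1 with ε := √(c·ln K/T) satisfying ε < d and ε < 1/2, and for every deterministic full-information algorithm (f_1, …, f_T), there exists an arm j ∈ {1,…,K} such that the expected pseudo-regret under instance I_j satisfies (ε/2)·E_{P_j}[#{t ≤ T : I_t ≠ j}] ≥ a·√(T·ln K). -/

import Mathlib

open MeasureTheory

/-- The Bernoulli measure on `Bool` with success probability `p` (for `p ∈ [0,1]`). -/
noncomputable def bern (p : ℝ) : Measure Bool :=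
  (PMF.bernoulli (min (Real.toNNReal p) 1) (min_le_right _ _)).toMeasure

/-- The lower-bound instance `I_j`: the product measure on `K × T` reward matrices
under which all entries are independent, entries of row `j` are Bernoulli((1+ε)/2),
and entries of every other row are Bernoulli(1/2). -/
noncomputable def lowerP (K T : ℕ) (ε : ℝ) (j : Fin K) :
    Measure (Fin K → Fin T → Bool) :=
  Measure.pi fun k => Measure.pi fun _ : Fin T =>
    bern (if k = j then (1 + ε) / 2 else 1 / 2)

/-- The arm played in round `t` (1-indexed) by a deterministic full-information
algorithm `alg` on the reward matrix `ω`: `alg m` maps a history of `m` observed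
reward columns to the arm played in round `m + 1`. -/
def played (K T : ℕ) (alg : (m : ℕ) → (Fin m → Fin K → Bool) → Fin K)
    (ω : Fin K → Fin T → Bool) (t : ℕ) : Fin K :=
  alg (t - 1) (fun s k => if h : (s : ℕ) < T then ω k ⟨s, h⟩ else false)

namespace FIRLB

/-- The weight (probability mass) of a reward matrix under instance `I_j`. -/
noncomputable def w (K T : ℕ) (ε : ℝ) (j : Fin K) (ω : Fin K → Fin T → Bool) : ℝ :=
  ∏ k, ∏ t, (if ω k t then (if k = j then (1 + ε) / 2 else 1 / 2)
             else 1 - (if k = j then (1 + ε) / 2 else 1 / 2))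

/-- The likelihood ratio of instance `I_j` against the uniform instance. -/
noncomputable def R (K T : ℕ) (ε : ℝ) (j : Fin K) (ω : Fin K → Fin T → Bool) : ℝ :=
  ∏ t, (if ω j t then 1 + ε else 1 - ε)

lemma sum_prod_prod (K T : ℕ) (F : Fin K → Fin T → Bool → ℝ) :
    ∑ ω : Fin K → Fin T → Bool, ∏ k, ∏ t, F k t (ω k t)
      = ∏ k, ∏ t, (F k t true + F k t false) := by
  calc ∑ ω : Fin K → Fin T → Bool, ∏ k, ∏ t, F k t (ω k t)
      = ∏ k, ∑ r : Fin T → Bool, ∏ t, F k t (r t) :=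
        (Fintype.prod_sum (fun k (r : Fin T → Bool) => ∏ t, F k t (r t))).symm
    _ = ∏ k, ∏ t, ∑ b, F k t b :=
        Finset.prod_congr rfl fun k _ => (Fintype.prod_sum fun t b => F k t b).symm
    _ = ∏ k, ∏ t, (F k t true + F k t false) := by
        refine Finset.prod_congr rfl fun k _ => Finset.prod_congr rfl fun t _ => ?_
        rw [Fintype.sum_bool]

lemma prod_row (K T : ℕ) (j : Fin K) (g : Fin K → Fin T → ℝ)
    (hg : ∀ k, k ≠ j → ∀ t, g k t = 1) :
    ∏ k, ∏ t, ((1 / 2 : ℝ) * g k t) = (1 / 2 : ℝ) ^ (K * T) * ∏ t, g j t := by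
  have h1 : ∀ k : Fin K, ∏ t : Fin T, ((1 / 2 : ℝ) * g k t)
      = (∏ _t : Fin T, (1 / 2 : ℝ)) * ∏ t, g k t := fun k => Finset.prod_mul_distrib
  rw [Finset.prod_congr rfl fun k _ => h1 k, Finset.prod_mul_distrib]
  have h2 : (∏ _k : Fin K, ∏ _t : Fin T, (1 / 2 : ℝ)) = (1 / 2 : ℝ) ^ (K * T) := by
    simp [Finset.prod_const, ← pow_mul, mul_comm]
  have h3 : (∏ k : Fin K, ∏ t : Fin T, g k t) = ∏ t, g j t := by
    refine Finset.prod_eq_single j (fun k _ hk => ?_) (by simp)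
    exact Finset.prod_eq_one fun t _ => hg k hk t
  rw [h2, h3]

lemma w_eq (K T : ℕ) (ε : ℝ) (j : Fin K) (ω : Fin K → Fin T → Bool) :
    w K T ε j ω = (1 / 2 : ℝ) ^ (K * T) * R K T ε j ω := by
  have h : w K T ε j ω = ∏ k, ∏ t,
      ((1 / 2 : ℝ) * (if k = j then (if ω k t then 1 + ε else 1 - ε) else 1)) := by
    refine Finset.prod_congr rfl fun k _ => Finset.prod_congr rfl fun t _ => ?_
    by_cases hk : k = j <;> by_cases hb : ω k t <;> simp [hk, hb] <;> ring
  rw [h, prod_row K T j _ (fun k hk t => by simp [hk])]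
  simp [R]

lemma w_nonneg (K T : ℕ) (ε : ℝ) (hε0 : 0 ≤ ε) (hε1 : ε ≤ 1) (j : Fin K)
    (ω : Fin K → Fin T → Bool) : 0 ≤ w K T ε j ω := by
  refine Finset.prod_nonneg fun k _ => Finset.prod_nonneg fun t _ => ?_
  split_ifs <;> linarith

lemma R_nonneg (K T : ℕ) (ε : ℝ) (hε0 : 0 ≤ ε) (hε1 : ε ≤ 1) (j : Fin K)
    (ω : Fin K → Fin T → Bool) : 0 ≤ R K T ε j ω := by
  refine Finset.prod_nonneg fun t _ => ?_
  split_ifs <;> linarith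

lemma sum_w (K T : ℕ) (ε : ℝ) (j : Fin K) :
    ∑ ω : Fin K → Fin T → Bool, w K T ε j ω = 1 := by
  refine Eq.trans (sum_prod_prod K T (fun k t b =>
    if b then (if k = j then (1 + ε) / 2 else 1 / 2)
    else 1 - (if k = j then (1 + ε) / 2 else 1 / 2))) ?_
  refine Finset.prod_eq_one fun k _ => Finset.prod_eq_one fun t _ => ?_
  rw [if_pos rfl, if_neg (by simp : ¬ (false = true))]
  ring

lemma sum_R2 (K T : ℕ) (ε : ℝ) (j : Fin K) :
    ∑ ω : Fin K → Fin T → Bool, (1 / 2 : ℝ) ^ (K * T) * (R K T ε j ω) ^ 2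
      = (1 + ε ^ 2) ^ T := by
  have hpt : ∀ ω : Fin K → Fin T → Bool,
      (1 / 2 : ℝ) ^ (K * T) * (R K T ε j ω) ^ 2
        = ∏ k, ∏ t, ((1 / 2 : ℝ) *
            (if k = j then (if ω k t then (1 + ε) ^ 2 else (1 - ε) ^ 2) else 1)) := by
    intro ω
    rw [prod_row K T j _ (fun k hk t => by simp [hk])]
    congr 1
    rw [R, ← Finset.prod_pow]
    exact Finset.prod_congr rfl fun t _ => by by_cases hb : ω j t <;> simp [hb]
  rw [Finset.sum_congr rfl fun ω _ => hpt ω]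
  refine Eq.trans (sum_prod_prod K T (fun k t b => (1 / 2 : ℝ) *
      (if k = j then (if b then (1 + ε) ^ 2 else (1 - ε) ^ 2) else 1))) ?_
  have hbr : ∀ k : Fin K, ∀ t : Fin T,
      ((1 / 2 : ℝ) * (if k = j then (if (true : Bool) then (1 + ε) ^ 2 else (1 - ε) ^ 2) else 1)
        + (1 / 2 : ℝ) * (if k = j then (if (false : Bool) then (1 + ε) ^ 2 else (1 - ε) ^ 2) else 1))
      = (if k = j then 1 + ε ^ 2 else 1) := by
    intro k t; by_cases hk : k = j <;> simp [hk] <;> ring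
  rw [Finset.prod_congr rfl fun k _ => Finset.prod_congr rfl fun t _ => hbr k t]
  rw [Finset.prod_eq_single j (fun k _ hk => Finset.prod_eq_one fun t _ => by simp [hk])
    (by simp)]
  simp

instance bern_prob (p : ℝ) : IsProbabilityMeasure (bern p) :=
  inferInstanceAs (IsProbabilityMeasure ((PMF.bernoulli _ (min_le_right _ _)).toMeasure))

instance lowerP_prob (K T : ℕ) (ε : ℝ) (j : Fin K) :
    IsProbabilityMeasure (lowerP K T ε j) := by
  unfold lowerP; infer_instance

lemma bern_singleton (p : ℝ) (hp0 : 0 ≤ p) (hp1 : p ≤ 1) (b : Bool) :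
    bern p {b} = ENNReal.ofReal (if b then p else 1 - p) := by
  rw [bern, PMF.toMeasure_apply_singleton _ _ (measurableSet_singleton b)]
  have hmin : min (Real.toNNReal p) 1 = Real.toNNReal p :=
    min_eq_left (Real.toNNReal_le_one.2 hp1)
  rw [PMF.bernoulli_apply, hmin]
  rw [Bool.apply_cond ENNReal.ofNNReal, ENNReal.coe_sub, ENNReal.coe_one]
  change cond b (ENNReal.ofReal p) (1 - ENNReal.ofReal p) = _
  cases b
  · rw [if_neg (by simp : ¬ (false = true)), Bool.cond_false,
      ENNReal.ofReal_sub _ hp0, ENNReal.ofReal_one]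
  · simp

lemma lowerP_singleton (K T : ℕ) (ε : ℝ) (hε0 : 0 ≤ ε) (hε1 : ε ≤ 1) (j : Fin K)
    (ω : Fin K → Fin T → Bool) :
    lowerP K T ε j {ω} = ENNReal.ofReal (w K T ε j ω) := by
  have hp0 : ∀ k : Fin K, 0 ≤ (if k = j then (1 + ε) / 2 else 1 / 2 : ℝ) := by
    intro k; split_ifs <;> linarith
  have hp1 : ∀ k : Fin K, (if k = j then (1 + ε) / 2 else 1 / 2 : ℝ) ≤ 1 := by
    intro k; split_ifs <;> linarith
  rw [lowerP, ← Set.univ_pi_singleton ω, Measure.pi_pi]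
  have hrow : ∀ k : Fin K,
      (Measure.pi fun _ : Fin T => bern (if k = j then (1 + ε) / 2 else 1 / 2)) {ω k}
        = ENNReal.ofReal (∏ t, (if ω k t then (if k = j then (1 + ε) / 2 else 1 / 2)
              else 1 - (if k = j then (1 + ε) / 2 else 1 / 2))) := by
    intro k
    rw [← Set.univ_pi_singleton (ω k), Measure.pi_pi,
      Finset.prod_congr rfl fun t _ => bern_singleton _ (hp0 k) (hp1 k) (ω k t),
      ← ENNReal.ofReal_prod_of_nonneg (fun t _ => by
        split_ifs <;> linarith [hp0 k, hp1 k])]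
  rw [Finset.prod_congr rfl fun k _ => hrow k,
    ← ENNReal.ofReal_prod_of_nonneg (fun k _ => Finset.prod_nonneg fun t _ => by
      split_ifs <;> linarith [hp0 k, hp1 k])]
  rfl

lemma integral_lowerP (K T : ℕ) (ε : ℝ) (hε0 : 0 ≤ ε) (hε1 : ε ≤ 1) (j : Fin K)
    (f : (Fin K → Fin T → Bool) → ℝ) :
    ∫ ω, f ω ∂(lowerP K T ε j) = ∑ ω, w K T ε j ω * f ω := by
  rw [integral_fintype (Integrable.of_finite)]
  refine Finset.sum_congr rfl fun ω _ => ?_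
  rw [measureReal_def, lowerP_singleton K T ε hε0 hε1 j ω, ENNReal.toReal_ofReal (w_nonneg K T ε hε0 hε1 j ω),
    smul_eq_mul]

lemma main_bound (K T : ℕ) (hK : 0 < K) (ε : ℝ) (hε0 : 0 ≤ ε) (hε1 : ε ≤ 1)
    (hKε : (K : ℝ) * (1 + ε ^ 2) ^ T ≤ ((K : ℝ) / 2) ^ 2)
    (I : ℕ → (Fin K → Fin T → Bool) → Fin K) :
    ∃ j : Fin K, (T : ℝ) / 2 ≤ ∑ ω, w K T ε j ω *
      ((((Finset.Icc 1 T).filter fun t => I t ω ≠ j).card : ℕ) : ℝ) := by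
  haveI : Nonempty (Fin K) := ⟨⟨0, hK⟩⟩
  set w0 : ℝ := ((1 : ℝ) / 2) ^ (K * T) with hw0
  have hw0nn : 0 ≤ w0 := by positivity
  set M : (Fin K → Fin T → Bool) → ℝ := fun ω => Real.sqrt (∑ j, R K T ε j ω ^ 2) with hM
  have hRM : ∀ (i : Fin K) ω, R K T ε i ω ≤ M ω := by
    intro i ω
    rw [show R K T ε i ω = Real.sqrt (R K T ε i ω ^ 2) from
      (Real.sqrt_sq (R_nonneg K T ε hε0 hε1 i ω)).symm]
    exact Real.sqrt_le_sqrt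
      (Finset.single_le_sum (f := fun j => R K T ε j ω ^ 2)
        (fun j _ => sq_nonneg _) (Finset.mem_univ i))
  -- total mass of w0
  have hsw0 : ∑ _ω : Fin K → Fin T → Bool, w0 = 1 := by
    rw [Finset.sum_const, Finset.card_univ]
    simp only [Fintype.card_fun, Fintype.card_bool, Fintype.card_fin]
    rw [nsmul_eq_mul, hw0]
    push_cast
    rw [← pow_mul, show T * K = K * T from Nat.mul_comm T K, ← mul_pow]
    norm_num
  -- bound on the expected maximum of likelihood ratios
  have hMb : ∑ ω, w0 * M ω ≤ (K : ℝ) / 2 := by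
    have hMnn : ∀ ω, 0 ≤ M ω := fun ω => Real.sqrt_nonneg _
    have hcs := Finset.sum_mul_sq_le_sq_mul_sq Finset.univ
      (fun _ω : Fin K → Fin T → Bool => Real.sqrt w0) (fun ω => Real.sqrt w0 * M ω)
    have e1 : ∀ ω : Fin K → Fin T → Bool,
        Real.sqrt w0 * (Real.sqrt w0 * M ω) = w0 * M ω := fun ω => by
      rw [← mul_assoc, Real.mul_self_sqrt hw0nn]
    have e2 : ∀ ω : Fin K → Fin T → Bool,
        (Real.sqrt w0 * M ω) ^ 2 = w0 * M ω ^ 2 := fun ω => by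
      rw [mul_pow, Real.sq_sqrt hw0nn]
    have e3 : (Real.sqrt w0 : ℝ) ^ 2 = w0 := Real.sq_sqrt hw0nn
    rw [Finset.sum_congr rfl fun ω _ => e1 ω] at hcs
    rw [Finset.sum_congr rfl fun ω _ => e2 ω] at hcs
    rw [Finset.sum_congr rfl fun (ω : Fin K → Fin T → Bool) _ => e3] at hcs
    rw [hsw0, one_mul] at hcs
    have hMsq : ∀ ω, w0 * M ω ^ 2 = ∑ j, w0 * R K T ε j ω ^ 2 := by
      intro ω
      rw [hM, Real.sq_sqrt (Finset.sum_nonneg fun j _ => sq_nonneg _), Finset.mul_sum]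
    have h4 : ∑ ω, w0 * M ω ^ 2 = (K : ℝ) * (1 + ε ^ 2) ^ T := by
      rw [Finset.sum_congr rfl fun ω _ => hMsq ω, Finset.sum_comm,
        Finset.sum_congr rfl fun j _ => sum_R2 K T ε j]
      simp [mul_comm]
    rw [h4] at hcs
    have h5 : (∑ ω, w0 * M ω) ^ 2 ≤ ((K : ℝ) / 2) ^ 2 := le_trans hcs hKε
    have h6 : 0 ≤ ∑ ω, w0 * M ω :=
      Finset.sum_nonneg fun ω _ => mul_nonneg hw0nn (hMnn ω)
    nlinarith [h5, h6]
  -- per-round, per-matrix bound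
  have hper : ∀ t : ℕ, ∀ ω : Fin K → Fin T → Bool,
      w0 * (∑ j, R K T ε j ω) - w0 * M ω
        ≤ ∑ j, w K T ε j ω * (if I t ω ≠ j then (1 : ℝ) else 0) := by
    intro t ω
    have h1 : ∀ j, w K T ε j ω * (if I t ω ≠ j then (1 : ℝ) else 0)
        = w0 * (R K T ε j ω - (if I t ω = j then R K T ε j ω else 0)) := by
      intro j
      rw [w_eq]
      by_cases h : I t ω = j <;> simp [h, hw0] <;> ring
    rw [Finset.sum_congr rfl fun j _ => h1 j, ← Finset.mul_sum, Finset.sum_sub_distrib,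
      Finset.sum_ite_eq]
    simp only [Finset.mem_univ, if_true]
    have := hRM (I t ω) ω
    have hsub : (∑ j, R K T ε j ω) - M ω ≤ (∑ j, R K T ε j ω) - R K T ε (I t ω) ω := by
      linarith
    nlinarith [mul_le_mul_of_nonneg_left hsub hw0nn]
  -- expected number of errors, summed over instances
  have hcount : ∀ j : Fin K, ∀ ω : Fin K → Fin T → Bool,
      ((((Finset.Icc 1 T).filter fun t => I t ω ≠ j).card : ℕ) : ℝ)
        = ∑ t ∈ Finset.Icc 1 T, (if I t ω ≠ j then (1 : ℝ) else 0) := by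
    intro j ω
    rw [Finset.card_filter]
    push_cast
    rfl
  have hmain : (K : ℝ) * ((T : ℝ) / 2)
      ≤ ∑ j, ∑ ω, w K T ε j ω *
          ((((Finset.Icc 1 T).filter fun t => I t ω ≠ j).card : ℕ) : ℝ) := by
    have hsw0R : ∀ j : Fin K, ∑ ω, w0 * R K T ε j ω = 1 := by
      intro j
      rw [← Finset.sum_congr rfl fun (ω : Fin K → Fin T → Bool) _ => w_eq K T ε j ω]
      exact sum_w K T ε j
    calc (K : ℝ) * ((T : ℝ) / 2)
        = ∑ _t ∈ Finset.Icc 1 T, ((K : ℝ) - (K : ℝ) / 2) := by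
          rw [Finset.sum_const, Nat.card_Icc]
          simp; ring
      _ ≤ ∑ t ∈ Finset.Icc 1 T,
            ((∑ ω, w0 * (∑ j, R K T ε j ω)) - ∑ ω, w0 * M ω) := by
          refine Finset.sum_le_sum fun t _ => ?_
          have : ∑ ω, w0 * (∑ j, R K T ε j ω) = (K : ℝ) := by
            have : ∀ ω : Fin K → Fin T → Bool,
                w0 * (∑ j, R K T ε j ω) = ∑ j, w0 * R K T ε j ω := fun ω => by
              simp [Finset.mul_sum]
            rw [Finset.sum_congr rfl fun ω _ => this ω, Finset.sum_comm,
              Finset.sum_congr rfl fun j _ => hsw0R j]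
            simp
          rw [this]
          linarith [hMb]
      _ = ∑ t ∈ Finset.Icc 1 T,
            ∑ ω, (w0 * (∑ j, R K T ε j ω) - w0 * M ω) := by
          refine Finset.sum_congr rfl fun t _ => ?_
          rw [Finset.sum_sub_distrib]
      _ ≤ ∑ t ∈ Finset.Icc 1 T, ∑ ω, ∑ j, w K T ε j ω *
            (if I t ω ≠ j then (1 : ℝ) else 0) := by
          exact Finset.sum_le_sum fun t _ => Finset.sum_le_sum fun ω _ => hper t ω
      _ = ∑ j, ∑ ω, w K T ε j ω *
            ((((Finset.Icc 1 T).filter fun t => I t ω ≠ j).card : ℕ) : ℝ) := by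
          refine Eq.trans Finset.sum_comm ?_
          refine Eq.trans (Finset.sum_congr rfl fun ω _ => Finset.sum_comm) ?_
          refine Eq.trans Finset.sum_comm ?_
          refine Finset.sum_congr rfl fun j _ => Finset.sum_congr rfl fun ω _ => ?_
          rw [hcount j ω, Finset.mul_sum]
  have hpig : ∃ j ∈ Finset.univ, (T : ℝ) / 2 ≤ ∑ ω, w K T ε j ω *
      ((((Finset.Icc 1 T).filter fun t => I t ω ≠ j).card : ℕ) : ℝ) := by
    refine Finset.exists_le_of_sum_le Finset.univ_nonempty ?_
    calc ∑ _j : Fin K, (T : ℝ) / 2 = (K : ℝ) * ((T : ℝ) / 2) := by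
          rw [Finset.sum_const]; simp [mul_comm]
      _ ≤ _ := hmain
  obtain ⟨j, _, hj⟩ := hpig
  exact ⟨j, hj⟩

end FIRLB

/-- **Regret lower bound for full-information stochastic bandits.** There are absolute
constants `c, d, a > 0` and `K₀ ≥ 1` such that for every `K ≥ K₀` and `T ≥ 1` with
`ε := √(c ln K / T)` satisfying `ε < d` and `ε < 1/2`, and every deterministic
full-information algorithm, there is an arm `j` whose instance `I_j` forces expected
pseudo-regret `(ε/2) · E_{P_j}[#{t ≤ T : I_t ≠ j}] ≥ a √(T ln K)`. -/
theorem full_information_regret_lower_bound :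
    ∃ c > (0 : ℝ), ∃ d > (0 : ℝ), ∃ a > (0 : ℝ), ∃ K₀ : ℕ, ∃ hK₀ : 1 ≤ K₀,
      ∀ K : ℕ, ∀ hK : K₀ ≤ K, ∀ T : ℕ, 1 ≤ T →
        ∀ ε : ℝ, ε = Real.sqrt (c * Real.log K / T) → ε < d → ε < 1 / 2 →
          ∀ alg : (m : ℕ) → (Fin m → Fin K → Bool) → Fin K,
            ∃ j : Fin K,
              a * Real.sqrt (T * Real.log K)
                ≤ ε / 2 * ∫ ω,
                    ((((Finset.Icc 1 T).filter
                        fun t => played K T alg ω t ≠ j).card : ℕ) : ℝ)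
                  ∂(lowerP K T ε j) := by
  refine ⟨1/2, by norm_num, 1, by norm_num, 1/8, by norm_num, 16, by norm_num,
    fun K hK T hT ε hεdef hεd hεhalf alg => ?_⟩
  have hK0 : 0 < K := lt_of_lt_of_le (by norm_num) hK
  have hT0 : (0 : ℝ) < T := by exact_mod_cast hT
  have hKR : (16 : ℝ) ≤ K := by exact_mod_cast hK
  have hlogK : 0 < Real.log K := Real.log_pos (by linarith)
  have hε0 : 0 ≤ ε := hεdef ▸ Real.sqrt_nonneg _
  have hε1 : ε ≤ 1 := by linarith
  have hε2 : ε ^ 2 = 1 / 2 * Real.log K / T := by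
    rw [hεdef, Real.sq_sqrt (by positivity)]
  have hε2T : ε ^ 2 * T = 1 / 2 * Real.log K := by
    rw [hε2]; field_simp
  -- the key hypothesis for main_bound
  have hKε : (K : ℝ) * (1 + ε ^ 2) ^ T ≤ ((K : ℝ) / 2) ^ 2 := by
    have h1 : (1 + ε ^ 2 : ℝ) ^ T ≤ Real.exp (ε ^ 2) ^ T := by
      refine pow_le_pow_left₀ (by positivity) ?_ T
      linarith [Real.add_one_le_exp (ε ^ 2)]
    have h2 : Real.exp (ε ^ 2) ^ T = Real.exp (1 / 2 * Real.log K) := by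
      rw [← Real.exp_nat_mul]
      congr 1
      rw [mul_comm]
      exact hε2T
    have h3 : Real.exp (1 / 2 * Real.log K) = Real.sqrt K := by
      have h4 : (Real.exp (1 / 2 * Real.log K)) ^ 2 = (K : ℝ) := by
        rw [← Real.exp_nat_mul]
        push_cast
        rw [show (2 : ℝ) * (1 / 2 * Real.log K) = Real.log K by ring,
          Real.exp_log (by positivity)]
      symm
      conv_lhs => rw [← h4]
      exact Real.sqrt_sq (Real.exp_pos _).le
    have h5 : Real.sqrt (K : ℝ) ≤ (K : ℝ) / 4 := by
      rw [show (K : ℝ) / 4 = Real.sqrt (((K : ℝ) / 4) ^ 2) from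
        (Real.sqrt_sq (by positivity)).symm]
      exact Real.sqrt_le_sqrt (by nlinarith)
    have h6 : (1 + ε ^ 2 : ℝ) ^ T ≤ (K : ℝ) / 4 := by
      calc (1 + ε ^ 2 : ℝ) ^ T ≤ Real.exp (ε ^ 2) ^ T := h1
        _ = Real.sqrt K := by rw [h2, h3]
        _ ≤ (K : ℝ) / 4 := h5
    nlinarith [h6, hK0]
  obtain ⟨j, hj⟩ := FIRLB.main_bound K T hK0 ε hε0 hε1 hKε
    (fun t ω => played K T alg ω t)
  refine ⟨j, ?_⟩
  rw [FIRLB.integral_lowerP K T ε hε0 hε1 j]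
  have hX : (0 : ℝ) ≤ (T : ℝ) * Real.log K := by positivity
  have hstep1 : (1 / 8 : ℝ) * Real.sqrt ((T : ℝ) * Real.log K)
      ≤ ε * (T : ℝ) / 4 := by
    have heq : (ε * (T : ℝ) / 4) ^ 2 = (T : ℝ) * Real.log K / 32 := by
      have : (ε * (T : ℝ) / 4) ^ 2 = ε ^ 2 * (T : ℝ) * (T : ℝ) / 16 := by ring
      rw [this, show ε ^ 2 * (T : ℝ) * (T : ℝ) = (ε ^ 2 * T) * T by ring, hε2T]
      ring
    have h7 : ε * (T : ℝ) / 4 = Real.sqrt ((T : ℝ) * Real.log K / 32) := by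
      rw [← heq, Real.sqrt_sq (by positivity)]
    have h8 : (1 / 8 : ℝ) * Real.sqrt ((T : ℝ) * Real.log K)
        = Real.sqrt ((T : ℝ) * Real.log K / 64) := by
      rw [show (T : ℝ) * Real.log K / 64 = ((1 / 8 : ℝ)) ^ 2 * ((T : ℝ) * Real.log K) by ring,
        Real.sqrt_mul (by norm_num : (0:ℝ) ≤ ((1 / 8 : ℝ)) ^ 2),
        Real.sqrt_sq (by norm_num : (0:ℝ) ≤ (1 / 8 : ℝ))]
    rw [h7, h8]
    exact Real.sqrt_le_sqrt (by linarith)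
  calc (1 / 8 : ℝ) * Real.sqrt ((T : ℝ) * Real.log K)
      ≤ ε * (T : ℝ) / 4 := hstep1
    _ = ε / 2 * ((T : ℝ) / 2) := by ring
    _ ≤ ε / 2 * ∑ ω, FIRLB.w K T ε j ω *
          ((((Finset.Icc 1 T).filter fun t => played K T alg ω t ≠ j).card : ℕ) : ℝ) := by
        refine mul_le_mul_of_nonneg_left ?_ (by linarith)
        exact hj
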